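/- Let λ₁, λ₂, λ₃ > 0 with λ₁² + λ₂² + λ₃² = 1 and suppose λ₃² = max{λ₁²,λ₂²,λ₃²}. Then (λ₁² + λ₂²)·h(λ₁²/(λ₁² + λ₂²)) ≤ (λ₁² + λ₃²)·h(λ₁²/(λ₁² + λ₃²)). -/

import Mathlib

noncomputable def binEnt (x : ℝ) : ℝ := -(x * Real.logb 2 x) - (1 - x) * Real.logb 2 (1 - x)

lemma binEnt_expand (a x : ℝ) (ha : 0 < a) (hx : 0 < x) :
    (a + x) * binEnt (a / (a + x)) =
      ((a + x) * Real.log (a + x) - a * Real.log a - x * Real.log x) / Real.log 2 := by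
  have hs : 0 < a + x := by linarith
  have h1p : 1 - a / (a + x) = x / (a + x) := by field_simp; ring
  unfold binEnt
  rw [h1p, Real.logb, Real.logb, Real.log_div ha.ne' hs.ne', Real.log_div hx.ne' hs.ne']
  have h2 : Real.log 2 ≠ 0 := by positivity
  field_simp
  ring

lemma mono_aux (a : ℝ) (ha : 0 < a) :
    StrictMonoOn (fun t : ℝ => (a + t) * Real.log (a + t) - t * Real.log t) (Set.Ioi 0) := by
  apply strictMonoOn_of_deriv_pos (convex_Ioi 0)
  · apply ContinuousOn.sub
    · exact ((continuous_const.add continuous_id).continuousOn).mul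
        (Real.continuousOn_log.comp ((continuous_const.add continuous_id).continuousOn)
          (fun t ht => by have : (0:ℝ) < t := ht; simp; nlinarith))
    · exact continuous_id.continuousOn.mul
        (Real.continuousOn_log.mono (fun t ht => by exact ne_of_gt ht))
  · intro t ht
    rw [interior_Ioi] at ht
    have ht' : (0:ℝ) < t := ht
    have hat : 0 < a + t := by linarith
    have d1 : HasDerivAt (fun t : ℝ => (a + t) * Real.log (a + t)) (Real.log (a + t) + 1) t := by
      have := (Real.hasDerivAt_mul_log hat.ne').comp t
        ((hasDerivAt_id t).const_add a)
      exact this.congr_deriv (by simp)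
    have d2 : HasDerivAt (fun t : ℝ => t * Real.log t) (Real.log t + 1) t :=
      Real.hasDerivAt_mul_log ht'.ne'
    have d := d1.sub d2
    rw [show deriv (fun t : ℝ => (a + t) * Real.log (a + t) - t * Real.log t) t =
        Real.log (a + t) + 1 - (Real.log t + 1) from d.deriv]
    have : Real.log t < Real.log (a + t) := Real.log_lt_log ht' (by linarith)
    linarith

theorem mcp_gW_min_at_largest (l1 l2 l3 : ℝ) (h1 : 0 < l1) (h2 : 0 < l2) (h3 : 0 < l3)
    (hnorm : l1^2 + l2^2 + l3^2 = 1)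
    (hmax : l3^2 = max (max (l1^2) (l2^2)) (l3^2)) :
    (l1^2 + l2^2) * binEnt (l1^2 / (l1^2 + l2^2)) ≤
      (l1^2 + l3^2) * binEnt (l1^2 / (l1^2 + l3^2)) := by
  have ha : 0 < l1^2 := by positivity
  have hb : 0 < l2^2 := by positivity
  have hc : 0 < l3^2 := by positivity
  have hbc : l2^2 ≤ l3^2 :=
    (le_max_right (l1^2) (l2^2)).trans ((le_max_left _ _).trans hmax.ge)
  rw [binEnt_expand _ _ ha hb, binEnt_expand _ _ ha hc]
  have hlog2 : (0:ℝ) < Real.log 2 := Real.log_pos (by norm_num)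
  have key := (mono_aux _ ha).monotoneOn hb hc hbc
  apply div_le_div_of_nonneg_right _ hlog2.le
  linarith
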